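/- arXiv:1008.3131 — 2 statements merged into one kernel-verified Lean document; each statement's English description precedes it below -/
import Mathlib

section
/- Let ν be a finite positive Borel measure supported in the closed unit disk {z ∈ ℂ : |z| ≤ 1}. If lim_{|a|→1⁻, a ∈ 𝔻} ∫ (1 - |a|²)/|1 - conj(a)·ξ|² dν(ξ) = 0, then ν(𝕋) = 0. -/
open MeasureTheory Filter Metric Complex

/-- The filter of points `a` of the open unit disk `𝔻` with `|a| → 1⁻`. -/
noncomputable def toBoundary : Filter ℂ :=
  Filter.comap (fun a : ℂ => ‖a‖) (nhdsWithin 1 (Set.Iio 1))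

private lemma kernel_nonneg (a ξ : ℂ) (ha : ‖a‖ ≤ 1) :
    0 ≤ (1 - ‖a‖ ^ 2) / ‖1 - (starRingEnd ℂ) a * ξ‖ ^ 2 := by
  apply div_nonneg
  · nlinarith [norm_nonneg a]
  · positivity

private lemma chord_bound (t : ℝ) :
    ‖Complex.exp ((t:ℂ) * Complex.I) - 1‖ ≤ 2 * |t| := by
  rcases le_or_gt (|t|) 1 with h | h
  · have := Complex.norm_exp_sub_one_le (x := (t:ℂ) * Complex.I) (by simpa using h)
    simpa using this
  · have h1 : ‖Complex.exp ((t:ℂ) * Complex.I)‖ = 1 :=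
      Complex.norm_exp_ofReal_mul_I t
    calc ‖Complex.exp ((t:ℂ) * Complex.I) - 1‖
        ≤ ‖Complex.exp ((t:ℂ) * Complex.I)‖ + ‖(1:ℂ)‖ := by
          simpa using
            norm_sub_le (Complex.exp ((t:ℂ) * Complex.I)) 1
      _ = 2 := by simp [h1]; norm_num
      _ ≤ 2 * |t| := by nlinarith

private lemma cover (N : ℕ) (hN : 0 < N) (ξ : ℂ) (hξ : ‖ξ‖ = 1) :
    ∃ k < N, ‖ξ - Complex.exp (((2*Real.pi*k/N : ℝ) : ℂ) * Complex.I)‖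
      ≤ 4*Real.pi/N := by
  have hπ : (0:ℝ) < Real.pi := Real.pi_pos
  have hNR : (0:ℝ) < N := by exact_mod_cast hN
  set θ₀ := ξ.arg with hθ₀
  set θ : ℝ := if θ₀ < 0 then θ₀ + 2*Real.pi else θ₀ with hθ
  have hθ0 : 0 ≤ θ := by
    rw [hθ]; split_ifs with h
    · have := Complex.neg_pi_lt_arg ξ; rw [← hθ₀] at this; linarith
    · linarith [not_lt.mp h]
  have hθ2 : θ < 2*Real.pi := by
    rw [hθ]; split_ifs with h
    · linarith
    · have := Complex.arg_le_pi ξ; rw [← hθ₀] at this; linarith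
  have hexp : Complex.exp ((θ:ℂ) * Complex.I) = ξ := by
    have hbase : Complex.exp ((θ₀:ℂ) * Complex.I) = ξ := by
      have := Complex.norm_mul_exp_arg_mul_I ξ
      rwa [hξ, Complex.ofReal_one, one_mul] at this
    rw [hθ]; split_ifs with h
    · push_cast
      rw [add_mul, Complex.exp_add, hbase]
      rw [show ((2:ℂ) * ↑Real.pi * Complex.I) = 2 * ↑Real.pi * Complex.I from rfl]
      rw [Complex.exp_two_pi_mul_I, mul_one]
    · exact hbase
  set k : ℕ := ⌊(N:ℝ)*θ/(2*Real.pi)⌋₊ with hk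
  have hknn : (0:ℝ) ≤ (N:ℝ)*θ/(2*Real.pi) := by positivity
  have hkN : k < N := by
    rw [hk]
    apply Nat.floor_lt hknn |>.mpr
    rw [div_lt_iff₀ (by linarith)]
    calc (N:ℝ)*θ < (N:ℝ)*(2*Real.pi) := by
          apply mul_lt_mul_of_pos_left hθ2 hNR
      _ = (N:ℝ)*(2*Real.pi) := rfl
  have hfl : (k:ℝ) ≤ (N:ℝ)*θ/(2*Real.pi) := Nat.floor_le hknn
  have hfl2 : (N:ℝ)*θ/(2*Real.pi) < (k:ℝ) + 1 := Nat.lt_floor_add_one _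
  set φ : ℝ := 2*Real.pi*k/N with hφ
  have hφle : φ ≤ θ := by
    rw [hφ, div_le_iff₀ hNR]
    rw [le_div_iff₀ (by linarith : (0:ℝ) < 2*Real.pi)] at hfl
    linarith
  have hθφ : θ - φ ≤ 2*Real.pi/N := by
    rw [div_lt_iff₀ (by linarith : (0:ℝ) < 2*Real.pi)] at hfl2
    rw [hφ, sub_le_iff_le_add, ← add_div, le_div_iff₀ hNR]
    nlinarith
  refine ⟨k, hkN, ?_⟩
  have hsplit : ξ - Complex.exp (((2*Real.pi*k/N : ℝ) : ℂ) * Complex.I)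
      = Complex.exp ((φ:ℂ) * Complex.I) *
        (Complex.exp (((θ - φ : ℝ):ℂ) * Complex.I) - 1) := by
    rw [mul_sub, ← Complex.exp_add, mul_one, ← hexp, hφ]
    push_cast
    ring_nf
  rw [hsplit, norm_mul, Complex.norm_exp_ofReal_mul_I, one_mul]
  calc ‖Complex.exp (((θ - φ : ℝ):ℂ) * Complex.I) - 1‖
      ≤ 2 * |θ - φ| := chord_bound _
    _ ≤ 2 * (2*Real.pi/N) := by
        rw [_root_.abs_of_nonneg (by linarith)]
        linarith
    _ = 4*Real.pi/N := by ring

private lemma kernel_integrable (ν : Measure ℂ) [IsFiniteMeasure ν]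
    (hsupp : ν ((Metric.closedBall (0:ℂ) 1)ᶜ) = 0) (a : ℂ) (ha : ‖a‖ < 1) :
    Integrable (fun ξ : ℂ =>
      (1 - ‖a‖ ^ 2) / ‖1 - (starRingEnd ℂ) a * ξ‖ ^ 2) ν := by
  have hmeas : AEStronglyMeasurable (fun ξ : ℂ =>
      (1 - ‖a‖ ^ 2) / ‖1 - (starRingEnd ℂ) a * ξ‖ ^ 2) ν := by
    apply Measurable.aestronglyMeasurable
    apply Measurable.div measurable_const
    exact ((continuous_norm.comp
      (continuous_const.sub (continuous_const.mul continuous_id))).pow 2).measurable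
  apply Integrable.mono' (integrable_const ((1 - ‖a‖ ^ 2) / (1 - ‖a‖) ^ 2))
    hmeas
  have hae : ∀ᵐ ξ ∂ν, ξ ∈ Metric.closedBall (0:ℂ) 1 := by
    refine MeasureTheory.mem_ae_iff.mpr ?_
    have : {x : ℂ | x ∈ Metric.closedBall (0:ℂ) 1}ᶜ = (Metric.closedBall (0:ℂ) 1)ᶜ := rfl
    rw [this]
    exact hsupp
  filter_upwards [hae] with ξ hξ
  have hξ1 : ‖ξ‖ ≤ 1 := by
    simpa using mem_closedBall_zero_iff.mp hξ
  have hd : 1 - ‖a‖ ≤ ‖1 - (starRingEnd ℂ) a * ξ‖ := by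
    have h1 : ‖(starRingEnd ℂ) a * ξ‖ ≤ ‖a‖ := by
      rw [norm_mul, Complex.norm_conj]
      nlinarith [norm_nonneg a]
    have := norm_sub_norm_le (1:ℂ) ((starRingEnd ℂ) a * ξ)
    simp only [norm_one] at this
    linarith
  rw [Real.norm_eq_abs, _root_.abs_of_nonneg (kernel_nonneg a ξ ha.le)]
  apply div_le_div_of_nonneg_left
  · nlinarith [norm_nonneg a]
  · exact pow_pos (by linarith) 2
  · nlinarith [norm_nonneg (1 - (starRingEnd ℂ) a * ξ)]

set_option maxHeartbeats 1000000 in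
/-- If `ν` is a finite positive Borel measure supported in the closed unit disk and
`∫ (1 - |a|²)/|1 - conj(a)ξ|² dν(ξ) → 0` as `|a| → 1⁻`, then `ν(𝕋) = 0`. -/
theorem vanishing_poisson_integral_implies_null_circle (ν : Measure ℂ) [IsFiniteMeasure ν]
    (hsupp : ν ((Metric.closedBall (0:ℂ) 1)ᶜ) = 0)
    (hlim : Filter.Tendsto
      (fun a : ℂ =>
        ∫ ξ, (1 - ‖a‖ ^ 2) / ‖1 - (starRingEnd ℂ) a * ξ‖ ^ 2 ∂ν)
      toBoundary (nhds 0)) :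
    ν (Metric.sphere (0:ℂ) 1) = 0 := by
  have hπ : (0:ℝ) < Real.pi := Real.pi_pos
  set C : ℝ := (1 + 4*Real.pi)^2 with hC
  have hCpos : 0 < C := by positivity
  suffices h : ∀ ε > 0, (ν (Metric.sphere (0:ℂ) 1)).toReal ≤ ε by
    have h0 : (ν (Metric.sphere (0:ℂ) 1)).toReal ≤ 0 :=
      le_of_forall_pos_le_add fun ε hε => by simpa using h ε hε
    have h1 : (ν (Metric.sphere (0:ℂ) 1)).toReal = 0 :=
      le_antisymm h0 ENNReal.toReal_nonneg
    rcases (ENNReal.toReal_eq_zero_iff _).mp h1 with h | h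
    · exact h
    · exact absurd h (measure_ne_top ν _)
  intro ε' hε'
  set ε : ℝ := ε' / (2 * C) with hεdef
  have hε : 0 < ε := by positivity
  -- extract an r₀ from the limit hypothesis
  have hIio : {x : ℝ | x < ε} ∈ nhds (0:ℝ) := Iio_mem_nhds hε
  have hmem := hlim hIio
  rw [Filter.mem_map, toBoundary, Filter.mem_comap] at hmem
  obtain ⟨s, hs, hsub⟩ := hmem
  obtain ⟨r₀, hr₀1, hr₀⟩ := mem_nhdsLT_iff_exists_Ioo_subset.mp hs
  have hr₀lt : r₀ < 1 := hr₀1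
  -- choose r
  set r : ℝ := (max r₀ 0 + 1) / 2 with hrdef
  have hm1 : max r₀ 0 < 1 := max_lt hr₀lt one_pos
  have hr1 : r < 1 := by rw [hrdef]; linarith
  have hr0 : 0 < r := by
    have : (0:ℝ) ≤ max r₀ 0 := le_max_right _ _
    rw [hrdef]; linarith
  have hrr₀ : r₀ < r := by
    have : r₀ ≤ max r₀ 0 := le_max_left _ _
    rw [hrdef]; linarith
  set δ : ℝ := 1 - r with hδdef
  have hδ : 0 < δ := by rw [hδdef]; linarith
  have hδ1 : δ ≤ 1 := by rw [hδdef]; linarith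
  have hδinv : 1 ≤ 1/δ := by rw [le_div_iff₀ hδ]; linarith
  set N : ℕ := ⌈1/δ⌉₊ with hNdef
  have hN1 : 1/δ ≤ (N:ℝ) := Nat.le_ceil _
  have hNpos : 0 < N := by
    have : (0:ℝ) < N := by linarith
    exact_mod_cast this
  have hNR : (0:ℝ) < N := by exact_mod_cast hNpos
  have hN2 : (N:ℝ) ≤ 2/δ := by
    have h1 : (N:ℝ) < 1/δ + 1 := Nat.ceil_lt_add_one (by positivity)
    have : (2:ℝ)/δ = 1/δ + 1/δ := by ring
    linarith
  have hNδ : 1/(N:ℝ) ≤ δ := by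
    rw [div_le_iff₀ hNR]
    have h1 : δ * (1/δ) ≤ δ * (N:ℝ) := mul_le_mul_of_nonneg_left hN1 hδ.le
    rw [mul_one_div, div_self hδ.ne'] at h1
    linarith
  -- sample points
  set a : ℕ → ℂ := fun k => (r:ℂ) * Complex.exp (((2*Real.pi*k/N : ℝ) : ℂ) * Complex.I)
    with hadef
  have habs : ∀ k, ‖a k‖ = r := by
    intro k
    rw [hadef]
    simp only [norm_mul, Complex.norm_real, Real.norm_eq_abs, Complex.norm_exp_ofReal_mul_I,
      _root_.abs_of_pos hr0, mul_one]
  set K : ℂ → ℂ → ℝ := fun b ξ =>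
    (1 - ‖b‖ ^ 2) / ‖1 - (starRingEnd ℂ) b * ξ‖ ^ 2 with hKdef
  have hsmall : ∀ k, (∫ ξ, K (a k) ξ ∂ν) < ε := by
    intro k
    have : a k ∈ (fun a : ℂ => ‖a‖) ⁻¹' s := by
      apply Set.mem_preimage.mpr
      apply hr₀
      simp only [Set.mem_Ioo, habs k]
      exact ⟨hrr₀, hr1⟩
    exact hsub this
  have hint : ∀ k, Integrable (K (a k)) ν := fun k =>
    kernel_integrable ν hsupp (a k) (by rw [habs]; exact hr1)
  set g : ℂ → ℝ := fun ξ => ∑ k ∈ Finset.range N, K (a k) ξ with hgdef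
  have hgint : Integrable g ν := integrable_finset_sum _ fun k _ => hint k
  have hgnn : ∀ ξ, 0 ≤ g ξ := fun ξ =>
    Finset.sum_nonneg fun k _ => kernel_nonneg _ _ (by rw [habs]; linarith)
  -- pointwise lower bound on the sphere
  have hglow : ∀ ξ ∈ Metric.sphere (0:ℂ) 1, 1 / (C * δ) ≤ g ξ := by
    intro ξ hξ
    have hξ1 : ‖ξ‖ = 1 := by
      simpa using mem_sphere_zero_iff_norm.mp hξ
    obtain ⟨k, hkN, hchord⟩ := cover N hNpos ξ hξ1
    set w : ℂ := Complex.exp (((2*Real.pi*k/N : ℝ) : ℂ) * Complex.I) with hw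
    have hwabs : ‖w‖ = 1 := Complex.norm_exp_ofReal_mul_I _
    have hterm : 1 / (C * δ) ≤ K (a k) ξ := by
      have hdle : ‖1 - (starRingEnd ℂ) (a k) * ξ‖ ≤ (1 + 4*Real.pi) * δ := by
        have hsplit : 1 - (starRingEnd ℂ) (a k) * ξ
            = (starRingEnd ℂ) w * (w - ξ) + (1 - (r:ℂ)) * ((starRingEnd ℂ) w * ξ) := by
          have hww : (starRingEnd ℂ) w * w = 1 := by
            have hns : Complex.normSq w = 1 := by
              rw [← Complex.sq_norm, hwabs]; norm_num
            rw [mul_comm, Complex.mul_conj, hns, Complex.ofReal_one]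
          simp only [hadef, map_mul, Complex.conj_ofReal]
          rw [← hw]
          linear_combination -hww
        rw [hsplit]
        calc ‖(starRingEnd ℂ) w * (w - ξ) + (1 - (r:ℂ)) * ((starRingEnd ℂ) w * ξ)‖
            ≤ ‖(starRingEnd ℂ) w * (w - ξ)‖
              + ‖(1 - (r:ℂ)) * ((starRingEnd ℂ) w * ξ)‖ := norm_add_le _ _
          _ ≤ 4*Real.pi/N + δ := by
              apply add_le_add
              · rw [norm_mul, Complex.norm_conj, hwabs, one_mul]
                rw [← norm_neg, neg_sub]
                exact hchord
              · rw [norm_mul, norm_mul, Complex.norm_conj, hwabs, one_mul, hξ1, mul_one]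
                have : ((1:ℂ) - (r:ℂ)) = ((δ : ℝ) : ℂ) := by
                  rw [hδdef]; push_cast; ring
                rw [this, Complex.norm_real, Real.norm_eq_abs, _root_.abs_of_pos hδ]
          _ ≤ 4*Real.pi*δ + δ := by
              have hδN : 1 ≤ δ * (N:ℝ) := by
                rw [div_le_iff₀ hNR] at hNδ
                linarith
              have : 4*Real.pi/N ≤ 4*Real.pi*δ := by
                rw [div_le_iff₀ hNR]
                nlinarith [hπ, hδN]
              linarith
          _ = (1 + 4*Real.pi) * δ := by ring
      have hdge : δ ≤ ‖1 - (starRingEnd ℂ) (a k) * ξ‖ := by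
        have h1 : ‖(starRingEnd ℂ) (a k) * ξ‖ = r := by
          rw [norm_mul, Complex.norm_conj, habs, hξ1, mul_one]
        have := norm_sub_norm_le (1:ℂ) ((starRingEnd ℂ) (a k) * ξ)
        simp only [norm_one, h1] at this
        rw [hδdef]
        linarith
      have hd0 : 0 < ‖1 - (starRingEnd ℂ) (a k) * ξ‖ := lt_of_lt_of_le hδ hdge
      simp only [hKdef]
      rw [habs k]
      rw [div_le_div_iff₀ (by positivity) (pow_pos hd0 2)]
      have hsq : ‖1 - (starRingEnd ℂ) (a k) * ξ‖ ^ 2 ≤ C * δ^2 := by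
        rw [hC]
        nlinarith
      have hnum : δ ≤ 1 - r^2 := by rw [hδdef]; nlinarith
      nlinarith
    calc 1 / (C * δ) ≤ K (a k) ξ := hterm
      _ ≤ g ξ := by
        rw [hgdef]
        exact Finset.single_le_sum
          (fun j _ => kernel_nonneg _ _ (by rw [habs]; linarith))
          (Finset.mem_range.mpr hkN)
  -- combine
  have hset : 1 / (C * δ) * (ν (Metric.sphere (0:ℂ) 1)).toReal
      ≤ ∫ ξ in Metric.sphere (0:ℂ) 1, g ξ ∂ν :=
    by have h := setIntegral_ge_of_const_le Metric.isClosed_sphere.measurableSet (measure_ne_top ν _) hglow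
         hgint.integrableOn
       rw [smul_eq_mul, mul_comm] at h
       exact h
  have hmono : (∫ ξ in Metric.sphere (0:ℂ) 1, g ξ ∂ν) ≤ ∫ ξ, g ξ ∂ν :=
    setIntegral_le_integral hgint (Filter.Eventually.of_forall hgnn)
  have hsum : (∫ ξ, g ξ ∂ν) = ∑ k ∈ Finset.range N, ∫ ξ, K (a k) ξ ∂ν := by
    rw [hgdef]
    exact integral_finset_sum _ fun k _ => hint k
  have hsumle : (∫ ξ, g ξ ∂ν) ≤ (N:ℝ) * ε := by
    rw [hsum]
    calc ∑ k ∈ Finset.range N, ∫ ξ, K (a k) ξ ∂ν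
        ≤ ∑ _k ∈ Finset.range N, ε := Finset.sum_le_sum fun k _ => (hsmall k).le
      _ = (N:ℝ) * ε := by simp [mul_comm]
  have hNε : (N:ℝ) * ε ≤ (2/δ) * ε := by nlinarith
  have hfinal : 1 / (C * δ) * (ν (Metric.sphere (0:ℂ) 1)).toReal ≤ (2/δ) * ε := by
    linarith
  have hM : (ν (Metric.sphere (0:ℂ) 1)).toReal ≤ 2 * C * ε := by
    have hpos : (0:ℝ) < C * δ := by positivity
    have h2 := mul_le_mul_of_nonneg_right hfinal (le_of_lt hpos)
    have heq1 : 1 / (C * δ) * (ν (Metric.sphere (0:ℂ) 1)).toReal * (C * δ)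
        = (ν (Metric.sphere (0:ℂ) 1)).toReal := by
      field_simp
    have heq2 : 2 / δ * ε * (C * δ) = 2 * C * ε := by
      field_simp
      try ring
    rw [heq1, heq2] at h2
    exact h2
  have heq3 : 2 * C * ε = ε' := by
    rw [hεdef]
    field_simp
    try ring
  linarith
end

section
/- Let ψ be an analytic self-map of 𝔻 and let ψ* : 𝕋 → ℂ be a measurable function with |ψ*| ≤ 1 a.e. such that for m-a.e. ζ ∈ 𝕋 the radial limit lim_{r→1⁻} ψ(rζ) exists and equals ψ*(ζ). Define the induced measure μ_ψ on Borel subsets E of the closed unit disk by μ_ψ(E) := m({ζ ∈ 𝕋 : ψ*(ζ) ∈ E}). Then lim_{|a|→1⁻, a ∈ 𝔻} ∫_𝕋 (1 - |a|²)/|1 - conj(a)·ψ*(ζ)|² dm(ζ) = 0 if and only if μ_ψ(S(h, θ₀)) = o(h) uniformly in θ₀, i.e. for every ε > 0 there exists h₀ > 0 such that μ_ψ(S(h, θ₀)) ≤ ε·h for all 0 < h ≤ h₀ and all θ₀ ∈ [0, 2π). -/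
open MeasureTheory Filter Metric Complex
open Real (pi_pos pi_gt_three two_pi_pos)
local notation "π" => Real.pi

/-- The Carleson window `S(h, θ₀) = {r·e^{iθ} : 1 - h ≤ r ≤ 1, |θ - θ₀| ≤ h}`. -/
def carlesonWindow (h θ₀ : ℝ) : Set ℂ :=
  {z : ℂ | ∃ r θ : ℝ, 1 - h ≤ r ∧ r ≤ 1 ∧ |θ - θ₀| ≤ h ∧ z = r * Complex.exp (θ * Complex.I)}

/-- The average of `f` over the unit circle `𝕋` with respect to normalized
arclength measure `m`: `∫_𝕋 f dm = (2π)⁻¹ ∫_0^{2π} f(e^{iθ}) dθ`. -/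
noncomputable def circleAvg (f : ℂ → ℝ) : ℝ :=
  (2 * Real.pi)⁻¹ * ∫ θ in (0:ℝ)..(2 * Real.pi), f (Complex.exp (θ * Complex.I))

/-- The induced measure `μ_ψ(E) = m({ζ ∈ 𝕋 : ψ*(ζ) ∈ E})` of a boundary-value
function `ψs : 𝕋 → ℂ`, realized as the pushforward of normalized arclength measure
on `[0, 2π)` under `θ ↦ ψ*(e^{iθ})`. -/
noncomputable def inducedMeasure (ψs : ℂ → ℂ) : Measure ℂ :=
  Measure.map (fun θ : ℝ => ψs (Complex.exp (θ * Complex.I)))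
    ((ENNReal.ofReal (2 * Real.pi))⁻¹ • volume.restrict (Set.Ioc (0:ℝ) (2 * Real.pi)))

noncomputable def Ker (a w : ℂ) : ℝ :=
  (1 - ‖a‖ ^ 2) / ‖1 - (starRingEnd ℂ) a * w‖ ^ 2

lemma Ker_meas (a : ℂ) : Measurable (Ker a) := by
  apply Measurable.div measurable_const
  apply Measurable.pow_const
  exact continuous_norm.measurable.comp (by fun_prop)

lemma Ker_nonneg {a : ℂ} (ha : ‖a‖ ≤ 1) (w : ℂ) : 0 ≤ Ker a w := by
  unfold Ker
  apply div_nonneg _ (by positivity)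
  nlinarith [norm_nonneg a]

lemma one_sub_abs_le {a w : ℂ} (hw : ‖w‖ ≤ 1) :
    1 - ‖a‖ ≤ ‖1 - (starRingEnd ℂ) a * w‖ := by
  have h1 := norm_sub_norm_le (1 : ℂ) ((starRingEnd ℂ) a * w)
  simp only [norm_one, norm_mul, Complex.norm_conj] at h1
  nlinarith [norm_nonneg a, norm_nonneg w, norm_nonneg (1 - (starRingEnd ℂ) a * w)]

lemma Ker_le {a w : ℂ} (ha : ‖a‖ < 1) (hw : ‖w‖ ≤ 1) :
    Ker a w ≤ 2 / (1 - ‖a‖) := by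
  have h0 : 0 < 1 - ‖a‖ := by linarith
  have hd := one_sub_abs_le (a := a) hw
  unfold Ker
  have hnum : 1 - ‖a‖ ^ 2 ≤ 2 * (1 - ‖a‖) := by
    nlinarith [norm_nonneg a]
  calc (1 - ‖a‖ ^ 2) / ‖1 - (starRingEnd ℂ) a * w‖ ^ 2
      ≤ (2 * (1 - ‖a‖)) / (1 - ‖a‖) ^ 2 := by
        apply div_le_div₀ (by positivity) hnum (by positivity)
        exact pow_le_pow_left₀ h0.le hd 2
    _ = 2 / (1 - ‖a‖) := by field_simp

lemma exp_sub_int_mul (θ : ℝ) (n : ℤ) :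
    Complex.exp (((θ - n * (2 * π) : ℝ)) * Complex.I) = Complex.exp ((θ:ℝ) * Complex.I) := by
  push_cast
  rw [sub_mul, Complex.exp_sub, mul_assoc, Complex.exp_int_mul_two_pi_mul_I]
  simp

lemma exists_good_angle (w : ℂ) (θ₀ : ℝ) :
    ∃ θ : ℝ, θ₀ - π < θ ∧ θ ≤ θ₀ + π ∧
      Complex.exp ((θ:ℝ) * Complex.I) = Complex.exp ((Complex.arg w : ℝ) * Complex.I) := by
  refine ⟨toIocMod Real.two_pi_pos (θ₀ - π) (Complex.arg w), ?_, ?_, ?_⟩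
  · exact (toIocMod_mem_Ioc Real.two_pi_pos _ _).1
  · have := (toIocMod_mem_Ioc Real.two_pi_pos (θ₀ - π) (Complex.arg w)).2
    linarith
  · show Complex.exp (((Complex.arg w - toIocDiv Real.two_pi_pos (θ₀ - π) (Complex.arg w) • (2*π) : ℝ)) * Complex.I) = _
    rw [zsmul_eq_mul]
    exact exp_sub_int_mul _ _

lemma carlesonWindow_measurable (h θ₀ : ℝ) : MeasurableSet (carlesonWindow h θ₀) := by
  have heq : carlesonWindow h θ₀ =
      (fun p : ℝ × ℝ => (p.1 : ℂ) * Complex.exp (p.2 * Complex.I)) ''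
        (Set.Icc (1-h) 1 ×ˢ Set.Icc (θ₀-h) (θ₀+h)) := by
    ext z
    constructor
    · rintro ⟨r, θ, h1, h2, h3, rfl⟩
      rw [abs_le] at h3
      exact ⟨(r, θ), ⟨⟨h1, h2⟩, ⟨by linarith [h3.1], by linarith [h3.2]⟩⟩, rfl⟩
    · rintro ⟨⟨r, θ⟩, ⟨⟨h1, h2⟩, ⟨h3, h4⟩⟩, rfl⟩
      exact ⟨r, θ, h1, h2, abs_le.2 ⟨by linarith, by linarith⟩, rfl⟩
  rw [heq]
  have hc : IsCompact ((fun p : ℝ × ℝ => (p.1 : ℂ) * Complex.exp (p.2 * Complex.I)) ''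
      (Set.Icc (1-h) 1 ×ˢ Set.Icc (θ₀-h) (θ₀+h))) := by
    apply IsCompact.image (isCompact_Icc.prod isCompact_Icc)
    continuity
  exact hc.isClosed.measurableSet

lemma carlesonWindow_subset_ball {h θ₀ : ℝ} (h1 : h ≤ 1) :
    carlesonWindow h θ₀ ⊆ Metric.closedBall (0:ℂ) 1 := by
  rintro z ⟨r, θ, hr1, hr2, _, rfl⟩
  simp only [Metric.mem_closedBall, dist_zero_right]
  rw [norm_mul, Complex.norm_exp_ofReal_mul_I, mul_one, Complex.norm_real, Real.norm_eq_abs,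
    _root_.abs_of_nonneg (by linarith : (0:ℝ) ≤ r)]
  exact hr2

lemma ball_subset_carlesonWindow {t θ₀ : ℝ} (ht : π ≤ t) :
    Metric.closedBall (0:ℂ) 1 ⊆ carlesonWindow t θ₀ := by
  intro w hw
  simp only [Metric.mem_closedBall, dist_zero_right] at hw
  have hπ := Real.pi_gt_three
  obtain ⟨θ, hθ1, hθ2, hθ3⟩ := exists_good_angle w θ₀
  refine ⟨‖w‖, θ, by linarith [norm_nonneg w], hw, ?_, ?_⟩
  · rw [abs_le]; constructor <;> linarith
  · rw [hθ3, Complex.norm_mul_exp_arg_mul_I]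

lemma one_sub_mul_abs_le (a w : ℂ) :
    1 - ‖a‖ * ‖w‖ ≤ ‖1 - (starRingEnd ℂ) a * w‖ := by
  have h1 := norm_sub_norm_le (1 : ℂ) ((starRingEnd ℂ) a * w)
  simpa [map_mul, Complex.norm_conj, map_one] using h1

lemma abs_one_sub_exp_le (φ : ℝ) :
    ‖1 - Complex.exp ((φ:ℝ) * Complex.I)‖ ≤ |φ| := by
  have h1 : ‖1 - Complex.exp ((φ:ℝ) * Complex.I)‖ ^ 2 = 2 - 2 * Real.cos φ := by
    rw [Complex.sq_norm, Complex.normSq_apply]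
    simp only [Complex.sub_re, Complex.one_re, Complex.exp_ofReal_mul_I_re,
      Complex.sub_im, Complex.one_im, Complex.exp_ofReal_mul_I_im]
    nlinarith [Real.sin_sq_add_cos_sq φ]
  have h2 : ‖1 - Complex.exp ((φ:ℝ) * Complex.I)‖ ^ 2 ≤ |φ| ^ 2 := by
    rw [h1, _root_.sq_abs]
    nlinarith [Real.one_sub_sq_div_two_le_cos (x := φ)]
  have := Real.sqrt_le_sqrt h2
  rwa [Real.sqrt_sq (norm_nonneg _), Real.sqrt_sq (abs_nonneg _)] at this

lemma conj_rep {ρ θ₀ : ℝ} : (starRingEnd ℂ) ((ρ:ℝ) * Complex.exp ((θ₀:ℝ) * Complex.I)) =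
    (ρ:ℝ) * Complex.exp ((-θ₀:ℝ) * Complex.I) := by
  rw [map_mul, Complex.conj_ofReal, ← Complex.exp_conj]
  congr 1
  simp [Complex.ext_iff]

lemma kernel_lower {h θ₀ : ℝ} (h0 : 0 < h) (h1 : h ≤ 1) {w : ℂ}
    (hw : w ∈ carlesonWindow h θ₀) :
    1 / (9*h) ≤ Ker (((1-h : ℝ) : ℂ) * Complex.exp ((θ₀:ℝ) * Complex.I)) w := by
  obtain ⟨r, θ, hr1, hr2, hθ, rfl⟩ := hw
  have hr0 : 0 ≤ r := by linarith
  set a : ℂ := ((1-h : ℝ) : ℂ) * Complex.exp ((θ₀:ℝ) * Complex.I) with ha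
  have habs : ‖a‖ = 1 - h := by
    rw [ha, norm_mul, Complex.norm_real, Real.norm_eq_abs, Complex.norm_exp_ofReal_mul_I, mul_one,
      _root_.abs_of_nonneg (by linarith : (0:ℝ) ≤ 1-h)]
  have hcw : (starRingEnd ℂ) a * ((r:ℝ) * Complex.exp ((θ:ℝ) * Complex.I)) =
      (((1-h)*r : ℝ) : ℂ) * Complex.exp (((θ - θ₀ : ℝ)) * Complex.I) := by
    rw [ha, conj_rep]
    push_cast
    rw [show ((θ:ℂ) - (θ₀:ℂ)) * Complex.I = -(θ₀:ℂ) * Complex.I + (θ:ℂ) * Complex.I by ring,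
      Complex.exp_add]
    ring
  set s : ℝ := (1-h)*r with hs
  have hs0 : 0 ≤ s := by nlinarith
  have hs1 : s ≤ 1 := by nlinarith
  have hs2 : (1-h)^2 ≤ s := by nlinarith
  -- upper bound on the denominator
  have hub : ‖1 - (starRingEnd ℂ) a * ((r:ℝ) * Complex.exp ((θ:ℝ) * Complex.I))‖ ≤ 3*h := by
    rw [hcw]
    have hdecomp : (1 : ℂ) - ((s:ℝ):ℂ) * Complex.exp (((θ - θ₀:ℝ)) * Complex.I) =
        (((1-s : ℝ)):ℂ) + ((s:ℝ):ℂ) * (1 - Complex.exp (((θ - θ₀:ℝ)) * Complex.I)) := by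
      push_cast; ring
    calc ‖(1:ℂ) - ((s:ℝ):ℂ) * Complex.exp (((θ - θ₀:ℝ)) * Complex.I)‖
        ≤ ‖((1-s : ℝ):ℂ)‖ + ‖((s:ℝ):ℂ) * (1 - Complex.exp (((θ - θ₀:ℝ)) * Complex.I))‖ := by
          rw [hdecomp]; exact norm_add_le _ _
      _ ≤ (1-s) + s * |θ - θ₀| := by
          rw [norm_mul, Complex.norm_real, Real.norm_eq_abs, Complex.norm_real, Real.norm_eq_abs,
            _root_.abs_of_nonneg (by linarith : (0:ℝ) ≤ 1-s), _root_.abs_of_nonneg hs0]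
          have := abs_one_sub_exp_le (θ - θ₀)
          nlinarith
      _ ≤ 3*h := by nlinarith
  -- lower bound on denominator (positivity)
  have hlb : h ≤ ‖1 - (starRingEnd ℂ) a * ((r:ℝ) * Complex.exp ((θ:ℝ) * Complex.I))‖ := by
    have := one_sub_mul_abs_le a ((r:ℝ) * Complex.exp ((θ:ℝ) * Complex.I))
    have habsw : ‖(r:ℝ) * Complex.exp ((θ:ℝ) * Complex.I)‖ = r := by
      rw [norm_mul, Complex.norm_real, Real.norm_eq_abs, Complex.norm_exp_ofReal_mul_I, mul_one,
        _root_.abs_of_nonneg hr0]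
    rw [habs, habsw] at this
    nlinarith
  unfold Ker
  rw [habs]
  have hnum : h ≤ 1 - (1-h)^2 := by nlinarith
  have hden : ‖1 - (starRingEnd ℂ) a * ((r:ℝ) * Complex.exp ((θ:ℝ) * Complex.I))‖ ^ 2 ≤ 9*h^2 := by
    nlinarith
  calc (1 : ℝ) / (9*h) = h / (9*h^2) := by field_simp
    _ ≤ (1 - (1-h)^2) / ‖1 - (starRingEnd ℂ) a * ((r:ℝ) * Complex.exp ((θ:ℝ) * Complex.I))‖ ^ 2 := by
        apply div_le_div₀ (by nlinarith) hnum (by nlinarith) hden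

set_option maxHeartbeats 1000000 in
lemma dist_lower {a w : ℂ} {θ₀ t : ℝ}
    (ha : a = ((‖a‖ : ℝ) : ℂ) * Complex.exp ((θ₀:ℝ) * Complex.I))
    (ha2 : 1/2 ≤ ‖a‖) (ha3 : ‖a‖ ≤ 1)
    (hw : ‖w‖ ≤ 1) (ht : 0 < t) (htπ : t ≤ π)
    (hnot : w ∉ carlesonWindow t θ₀) :
    t / (2*π) ≤ ‖1 - (starRingEnd ℂ) a * w‖ := by
  have hπ := Real.pi_gt_three
  have habsw := norm_nonneg w
  have htriv : t / (2*π) ≤ 1/2 := by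
    rw [div_le_iff₀ (by linarith)]; linarith
  have httriv : t / (2*π) ≤ t := by
    rw [div_le_iff₀ (by linarith)]; nlinarith
  by_cases hsmall : ‖w‖ < 1 - t
  · have h1 := one_sub_mul_abs_le a w
    have : 1 - ‖w‖ ≤ 1 - ‖a‖ * ‖w‖ := by nlinarith
    linarith
  push_neg at hsmall
  by_cases hw0 : w = 0
  · subst hw0
    simp only [mul_zero, sub_zero, norm_one]
    linarith
  obtain ⟨θ, hθ1, hθ2, hθ3⟩ := exists_good_angle w θ₀
  have hwrep : w = ((‖w‖ : ℝ) : ℂ) * Complex.exp ((θ:ℝ) * Complex.I) := by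
    rw [hθ3, Complex.norm_mul_exp_arg_mul_I]
  have hang : t < |θ - θ₀| := by
    by_contra hc
    push_neg at hc
    exact hnot ⟨‖w‖, θ, by linarith, hw, hc, hwrep⟩
  by_cases hwhalf : ‖w‖ ≤ 1/2
  · have h1 := one_sub_mul_abs_le a w
    nlinarith
  push_neg at hwhalf
  set ρ : ℝ := ‖a‖ * ‖w‖ with hρdef
  have hρ : 1/4 ≤ ρ := by nlinarith
  have hρ1 : ρ ≤ 1 := by nlinarith
  have hφ : |θ - θ₀| ≤ π := by
    rw [abs_le]; constructor <;> linarith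
  have hcw : (starRingEnd ℂ) a * w = ((ρ:ℝ):ℂ) * Complex.exp (((θ - θ₀ : ℝ)) * Complex.I) := by
    rw [hρdef]
    nth_rewrite 1 [ha]
    nth_rewrite 1 [hwrep]
    rw [conj_rep]
    push_cast
    rw [show ((θ:ℂ) - (θ₀:ℂ)) * Complex.I = -(θ₀:ℂ) * Complex.I + (θ:ℂ) * Complex.I by ring,
      Complex.exp_add]
    ring
  have hsq : ‖1 - (starRingEnd ℂ) a * w‖ ^ 2
      = 1 - 2*ρ*Real.cos (θ - θ₀) + ρ^2 := by
    rw [hcw, Complex.sq_norm, Complex.normSq_apply]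
    simp only [Complex.sub_re, Complex.one_re, Complex.mul_re, Complex.ofReal_re,
      Complex.ofReal_im, Complex.exp_ofReal_mul_I_re, Complex.exp_ofReal_mul_I_im,
      Complex.sub_im, Complex.one_im, Complex.mul_im]
    nlinarith [Real.sin_sq_add_cos_sq (θ - θ₀)]
  have hcos := Real.cos_le_one_sub_mul_cos_sq hφ
  have hsqle : (t / (2*π))^2 ≤ ‖1 - (starRingEnd ℂ) a * w‖ ^ 2 := by
    rw [hsq]
    have habsφ : t^2 ≤ (θ - θ₀)^2 := by
      nlinarith [_root_.sq_abs (θ - θ₀), abs_nonneg (θ - θ₀)]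
    have hpi2 : (0:ℝ) < π^2 := by positivity
    have h3' : 2*t^2 ≤ π^2 * (1 - Real.cos (θ - θ₀)) := by
      have step1 : (2:ℝ)*t^2 ≤ 2*(θ-θ₀)^2 := by linarith
      have step2 : (2:ℝ)*(θ-θ₀)^2 = 2/π^2*(θ-θ₀)^2*π^2 := by field_simp
      have step3 : 2/π^2*(θ-θ₀)^2*π^2 ≤ (1 - Real.cos (θ-θ₀))*π^2 :=
        mul_le_mul_of_nonneg_right (by linarith) hpi2.le
      nlinarith [step1, step2, step3]
    have hm : 0 ≤ 1 - Real.cos (θ-θ₀) := by nlinarith [Real.cos_le_one (θ-θ₀)]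
    have h5 : 0 ≤ (ρ - 1/4) * (1 - Real.cos (θ-θ₀)) := mul_nonneg (by linarith) hm
    have hB : (1 - Real.cos (θ-θ₀))/2 ≤ 1 - 2*ρ*Real.cos (θ-θ₀) + ρ^2 := by
      nlinarith [sq_nonneg (1-ρ)]
    have hC : ((1 - Real.cos (θ-θ₀))/2) * (2*π)^2
        ≤ (1 - 2*ρ*Real.cos (θ-θ₀) + ρ^2) * (2*π)^2 :=
      mul_le_mul_of_nonneg_right hB (by positivity)
    have ht2 : (0:ℝ) < t^2 := by positivity
    rw [div_pow]
    rw [div_le_iff₀ (by positivity)]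
    nlinarith [hC, h3']
  have := Real.sqrt_le_sqrt hsqle
  rwa [Real.sqrt_sq (by positivity), Real.sqrt_sq (norm_nonneg _)] at this

lemma Ker_upper {a w : ℂ} {θ₀ t : ℝ}
    (ha : a = ((‖a‖ : ℝ) : ℂ) * Complex.exp ((θ₀:ℝ) * Complex.I))
    (ha2 : 1/2 ≤ ‖a‖) (ha3 : ‖a‖ ≤ 1)
    (hw : ‖w‖ ≤ 1) (ht : 0 < t) (htπ : t ≤ π)
    (hnot : w ∉ carlesonWindow t θ₀) :
    Ker a w ≤ (1 - ‖a‖) * (8 * π^2) / t^2 := by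
  have hπ := Real.pi_gt_three
  have hd := dist_lower ha ha2 ha3 hw ht htπ hnot
  unfold Ker
  have hnum : 1 - ‖a‖ ^ 2 ≤ 2 * (1 - ‖a‖) := by
    nlinarith [norm_nonneg a]
  have hden : (t / (2*π))^2 ≤ ‖1 - (starRingEnd ℂ) a * w‖ ^ 2 :=
    pow_le_pow_left₀ (by positivity) hd 2
  calc (1 - ‖a‖ ^ 2) / ‖1 - (starRingEnd ℂ) a * w‖ ^ 2
      ≤ (2 * (1 - ‖a‖)) / (t / (2*π))^2 := by
        apply div_le_div₀ (by nlinarith) hnum (by positivity) hden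
    _ = (1 - ‖a‖) * (8 * π^2) / t^2 := by
        field_simp
        ring

noncomputable def baseM : MeasureTheory.Measure ℝ :=
  (ENNReal.ofReal (2 * Real.pi))⁻¹ • MeasureTheory.volume.restrict (Set.Ioc (0:ℝ) (2 * Real.pi))

lemma inducedMeasure_eq (ψs : ℂ → ℂ) :
    inducedMeasure ψs = Measure.map (fun θ : ℝ => ψs (Complex.exp (θ * Complex.I))) baseM := rfl

lemma g_meas {ψs : ℂ → ℂ} (hmeas : Measurable ψs) :
    Measurable (fun θ : ℝ => ψs (Complex.exp ((θ:ℝ) * Complex.I))) :=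
  hmeas.comp ((Complex.continuous_exp.comp
    (Complex.continuous_ofReal.mul continuous_const)).measurable)

lemma inducedMeasure_prob {ψs : ℂ → ℂ} (hmeas : Measurable ψs) :
    IsProbabilityMeasure (inducedMeasure ψs) := by
  constructor
  rw [inducedMeasure_eq, Measure.map_apply (g_meas hmeas) MeasurableSet.univ]
  simp only [Set.preimage_univ, baseM, Measure.smul_apply, Measure.restrict_apply
    MeasurableSet.univ, Set.univ_inter, Real.volume_Ioc, smul_eq_mul]
  rw [show (2 * Real.pi - 0) = 2 * Real.pi by ring]
  exact ENNReal.inv_mul_cancel (ne_of_gt (ENNReal.ofReal_pos.2 (by positivity)))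
    ENNReal.ofReal_ne_top

lemma inducedMeasure_supp {ψs : ℂ → ℂ} (hmeas : Measurable ψs)
    (hmod : ∀ᵐ (θ : ℝ) ∂(volume.restrict (Set.Ioc (0:ℝ) (2 * Real.pi))),
      ‖ψs (Complex.exp (θ * Complex.I))‖ ≤ 1) :
    ∀ᵐ w ∂(inducedMeasure ψs), ‖w‖ ≤ 1 := by
  rw [inducedMeasure_eq]
  rw [MeasureTheory.ae_map_iff (g_meas hmeas).aemeasurable
    ((isClosed_le continuous_norm continuous_const).measurableSet)]
  exact Measure.ae_smul_measure hmod _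

lemma circleAvg_eq {ψs : ℂ → ℂ} (hmeas : Measurable ψs) (a : ℂ) :
    circleAvg (fun ζ =>
        (1 - ‖a‖ ^ 2) / ‖1 - (starRingEnd ℂ) a * ψs ζ‖ ^ 2)
      = ∫ w, Ker a w ∂(inducedMeasure ψs) := by
  rw [inducedMeasure_eq,
    MeasureTheory.integral_map (g_meas hmeas).aemeasurable (Ker_meas a).aestronglyMeasurable]
  rw [show baseM = (ENNReal.ofReal (2 * Real.pi))⁻¹ •
    MeasureTheory.volume.restrict (Set.Ioc (0:ℝ) (2 * Real.pi)) from rfl]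
  rw [MeasureTheory.integral_smul_measure]
  rw [circleAvg, intervalIntegral.integral_of_le (by positivity : (0:ℝ) ≤ 2 * Real.pi)]
  rw [ENNReal.toReal_inv, ENNReal.toReal_ofReal (by positivity : (0:ℝ) ≤ 2 * Real.pi)]
  rw [smul_eq_mul]
  rfl

lemma Ker_integrable {ψs : ℂ → ℂ} (hmeas : Measurable ψs)
    (hmod : ∀ᵐ (θ : ℝ) ∂(volume.restrict (Set.Ioc (0:ℝ) (2 * Real.pi))),
      ‖ψs (Complex.exp (θ * Complex.I))‖ ≤ 1)
    {a : ℂ} (ha : ‖a‖ < 1) :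
    Integrable (Ker a) (inducedMeasure ψs) := by
  haveI := inducedMeasure_prob hmeas
  apply Integrable.mono' (integrable_const (2/(1 - ‖a‖)))
    (Ker_meas a).aestronglyMeasurable
  filter_upwards [inducedMeasure_supp hmeas hmod] with w hw
  rw [Real.norm_eq_abs, _root_.abs_of_nonneg (Ker_nonneg ha.le w)]
  exact Ker_le ha hw

set_option maxHeartbeats 2000000 in
lemma reverse_bound {ψs : ℂ → ℂ} (hmeas : Measurable ψs)
    (hmod : ∀ᵐ (θ : ℝ) ∂(volume.restrict (Set.Ioc (0:ℝ) (2 * Real.pi))),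
      ‖ψs (Complex.exp (θ * Complex.I))‖ ≤ 1)
    {ε h₀ : ℝ} (hε : 0 < ε) (hh₀ : 0 < h₀)
    (hcar : ∀ h : ℝ, 0 < h → h ≤ h₀ → ∀ θ₀ : ℝ, 0 ≤ θ₀ → θ₀ < 2 * Real.pi →
      inducedMeasure ψs (carlesonWindow h θ₀) ≤ ENNReal.ofReal (ε/(256*π^2) * h))
    {a : ℂ} (ha2 : ‖a‖ < 1) (hah : 1/2 ≤ ‖a‖)
    (hhh₀ : 1 - ‖a‖ ≤ h₀)
    (hhε : 1 - ‖a‖ ≤ ε * h₀^3/(512*π^3)) :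
    ∫ w, Ker a w ∂(inducedMeasure ψs) ≤ ε/2 := by
  classical
  haveI hprob := inducedMeasure_prob hmeas
  have hπ := Real.pi_gt_three
  set μ := inducedMeasure ψs with hμ
  set h : ℝ := 1 - ‖a‖ with hhdef
  clear_value h
  have hh0 : 0 < h := by simp only [hhdef]; linarith
  have hhhalf : h ≤ 1/2 := by simp only [hhdef]; linarith
  have ha0 : a ≠ 0 := by
    intro hc
    rw [hc, norm_zero] at hah
    linarith
  -- normalized argument
  set θ₀ : ℝ := if 0 ≤ Complex.arg a then Complex.arg a else Complex.arg a + 2*π with hθ₀def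
  have harg1 := Complex.arg_le_pi a
  have harg2 := Complex.neg_pi_lt_arg a
  have hθ₀1 : 0 ≤ θ₀ := by
    rw [hθ₀def]; split_ifs with hc
    · exact hc
    · push_neg at hc; linarith
  have hθ₀2 : θ₀ < 2*π := by
    rw [hθ₀def]; split_ifs with hc
    · linarith
    · push_neg at hc; linarith
  have harep : a = ((‖a‖ : ℝ) : ℂ) * Complex.exp ((θ₀:ℝ) * Complex.I) := by
    rw [hθ₀def]; split_ifs with hc
    · exact (Complex.norm_mul_exp_arg_mul_I a).symm
    · have : Complex.exp (((Complex.arg a + 2*π : ℝ)) * Complex.I)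
          = Complex.exp ((Complex.arg a : ℝ) * Complex.I) := by
        have := exp_sub_int_mul (Complex.arg a) (-1)
        rw [show (Complex.arg a - (-1 : ℤ) * (2*π) : ℝ) = Complex.arg a + 2*π by push_cast; ring]
          at this
        exact this
      rw [this]
      exact (Complex.norm_mul_exp_arg_mul_I a).symm
  -- dyadic scale count
  have hex : ∃ n : ℕ, π ≤ 2^n * h := by
    obtain ⟨n, hn⟩ := pow_unbounded_of_one_lt (π / h) (one_lt_two (α := ℝ))
    exact ⟨n, by rw [div_lt_iff₀ hh0] at hn; linarith⟩
  set N := Nat.find hex with hNdef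
  have hN : π ≤ 2^N * h := Nat.find_spec hex
  have hcover : Metric.closedBall (0:ℂ) 1 ⊆ carlesonWindow (2^N*h) θ₀ :=
    ball_subset_carlesonWindow hN
  have h2N : (2:ℝ)^(N+1) * h ≤ 4*π := by
    rcases Nat.eq_zero_or_pos N with hN0 | hN0
    · rw [hN0]; norm_num; linarith
    · have := Nat.find_min hex (show N - 1 < N by omega)
      push_neg at this
      have hexp : (2:ℝ)^(N+1) = 4 * 2^(N-1) := by
        rw [show N + 1 = (N-1) + 2 by omega, pow_add]
        ring
      rw [hexp]
      nlinarith
  -- the majorant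
  set F : ℂ → ℝ := fun w => ∑ k ∈ Finset.range (N+1),
    Set.indicator (carlesonWindow (2^k*h) θ₀) (fun _ => 32*π^2/(4^k*h)) w with hFdef
  have hpoint : ∀ w : ℂ, ‖w‖ ≤ 1 → Ker a w ≤ F w := by
    intro w hw
    have hQ : ∃ k : ℕ, w ∈ carlesonWindow (2^k*h) θ₀ :=
      ⟨N, hcover (by simpa [Metric.mem_closedBall, dist_zero_right] using hw)⟩
    set j := Nat.find hQ with hjdef
    clear_value j
    have hjmem : w ∈ carlesonWindow (2^j*h) θ₀ := hjdef ▸ Nat.find_spec hQ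
    have hjN : j ≤ N := hjdef ▸ Nat.find_le (hcover
      (by simpa [Metric.mem_closedBall, dist_zero_right] using hw))
    have hsingle : Set.indicator (carlesonWindow (2^j*h) θ₀) (fun _ => 32*π^2/(4^j*h)) w ≤ F w := by
      rw [hFdef]
      apply Finset.single_le_sum (f := fun k =>
        Set.indicator (carlesonWindow (2^k*h) θ₀) (fun _ => 32*π^2/((4:ℝ)^k*h)) w)
        (fun k _ => Set.indicator_nonneg (fun _ _ => by positivity) w)
        (Finset.mem_range.2 (by omega))
    rw [Set.indicator_of_mem hjmem] at hsingle
    refine le_trans ?_ hsingle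
    rcases Nat.eq_zero_or_pos j with hj0 | hj0
    · -- j = 0 : trivial bound
      rw [hj0]
      have := Ker_le ha2 hw
      have h32 : 2/(1 - ‖a‖) ≤ 32*π^2/((4:ℝ)^0*h) := by
        rw [← hhdef]
        norm_num
        apply div_le_div₀ (by positivity) (by nlinarith) hh0 le_rfl
      linarith
    · -- j = m+1
      obtain ⟨m, rfl⟩ : ∃ m, j = m + 1 := ⟨j - 1, by omega⟩
      have hnot : w ∉ carlesonWindow (2^m*h) θ₀ := Nat.find_min hQ (by omega)
      have htpos : (0:ℝ) < 2^m*h := by positivity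
      have htπ : (2:ℝ)^m*h ≤ π := by
        have := Nat.find_min hex (show m < N by omega)
        push_neg at this
        linarith
      have := Ker_upper harep hah ha2.le hw htpos htπ hnot
      rw [← hhdef] at this
      refine le_trans this (le_of_eq ?_)
      have hpow : ((2:ℝ)^m)^2 = 4^m := by
        rw [← pow_mul, mul_comm, pow_mul]; norm_num
      rw [show ((2:ℝ)^m*h)^2 = 4^m * h^2 by rw [mul_pow, hpow]]
      rw [show (4:ℝ)^(m+1) = 4 * 4^m by rw [pow_succ]; ring]
      field_simp
      ring
  -- integral comparison
  have hKint : Integrable (Ker a) μ := Ker_integrable hmeas hmod ha2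
  have hFint : Integrable F μ := by
    apply integrable_finset_sum
    intro k _
    exact (integrable_const _).indicator (carlesonWindow_measurable _ _)
  have hcomp : ∫ w, Ker a w ∂μ ≤ ∫ w, F w ∂μ := by
    apply integral_mono_ae hKint hFint
    filter_upwards [inducedMeasure_supp hmeas hmod] with w hw
    exact hpoint w hw
  have hFval : ∫ w, F w ∂μ = ∑ k ∈ Finset.range (N+1),
      (μ (carlesonWindow (2^k*h) θ₀)).toReal * (32*π^2/(4^k*h)) := by
    rw [hFdef, integral_finset_sum _ (fun k _ =>
      (integrable_const _).indicator (carlesonWindow_measurable _ _))]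
    refine Finset.sum_congr rfl (fun k _ => ?_)
    rw [integral_indicator_const _ (carlesonWindow_measurable _ _)]
    simp [smul_eq_mul, measureReal_def]
  -- termwise bound
  have hterm : ∀ k ∈ Finset.range (N+1),
      (μ (carlesonWindow (2^k*h) θ₀)).toReal * (32*π^2/(4^k*h))
        ≤ 32*π^2*(ε/(256*π^2)) * (1/2)^k + 32*π^2*(h^2/h₀^3) * 2^k := by
    intro k _
    have hc : (0:ℝ) < 32*π^2/((4:ℝ)^k*h) := by positivity
    by_cases hcase : 2^k*h ≤ h₀
    · have hμS := hcar (2^k*h) (by positivity) hcase θ₀ hθ₀1 hθ₀2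
      have hm : (μ (carlesonWindow (2^k*h) θ₀)).toReal ≤ ε/(256*π^2) * (2^k*h) :=
        ENNReal.toReal_le_of_le_ofReal (by positivity) hμS
      have heq : ε/(256*π^2) * (2^k*h) * (32*π^2/((4:ℝ)^k*h))
          = 32*π^2*(ε/(256*π^2)) * (1/2)^k := by
        have h4 : (4:ℝ)^k = 2^k * 2^k := by
          rw [show (4:ℝ) = 2*2 by norm_num, mul_pow]
        rw [h4, one_div_pow]
        field_simp
      have hsecond : (0:ℝ) ≤ 32*π^2*(h^2/h₀^3) * 2^k := by positivity
      nlinarith [mul_le_mul_of_nonneg_right hm hc.le]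
    · push_neg at hcase
      have hm : (μ (carlesonWindow (2^k*h) θ₀)).toReal ≤ 1 := by
        have h1 : μ (carlesonWindow (2^k*h) θ₀) ≤ 1 := prob_le_one
        exact le_trans (ENNReal.toReal_mono ENNReal.one_ne_top h1) (by norm_num)
      have hone : (1:ℝ) ≤ ((2^k*h)/h₀)^3 := by
        apply one_le_pow₀
        rw [le_div_iff₀ hh₀]
        linarith
      have heq : ((2^k*h)/h₀)^3 * (32*π^2/((4:ℝ)^k*h))
          = 32*π^2*(h^2/h₀^3) * 2^k := by
        have h4 : (4:ℝ)^k = 2^k * 2^k := by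
          rw [show (4:ℝ) = 2*2 by norm_num, mul_pow]
        rw [h4]
        have hx : (0:ℝ) < (2:ℝ)^k := by positivity
        field_simp
      have hfirst : (0:ℝ) ≤ 32*π^2*(ε/(256*π^2)) * (1/2)^k := by positivity
      nlinarith [mul_le_mul_of_nonneg_right (le_trans hm hone) hc.le,
        mul_le_mul_of_nonneg_right hm hc.le]
  -- sum the bounds
  have hsum : ∑ k ∈ Finset.range (N+1),
      (μ (carlesonWindow (2^k*h) θ₀)).toReal * (32*π^2/(4^k*h))
        ≤ 32*π^2*(ε/(256*π^2)) * 2 + 32*π^2*(h^2/h₀^3) * 2^(N+1) := by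
    calc ∑ k ∈ Finset.range (N+1),
        (μ (carlesonWindow (2^k*h) θ₀)).toReal * (32*π^2/(4^k*h))
        ≤ ∑ k ∈ Finset.range (N+1),
          (32*π^2*(ε/(256*π^2)) * (1/2)^k + 32*π^2*(h^2/h₀^3) * 2^k) :=
          Finset.sum_le_sum hterm
      _ = 32*π^2*(ε/(256*π^2)) * (∑ k ∈ Finset.range (N+1), (1/2:ℝ)^k)
          + 32*π^2*(h^2/h₀^3) * (∑ k ∈ Finset.range (N+1), (2:ℝ)^k) := by
          rw [Finset.sum_add_distrib, ← Finset.mul_sum, ← Finset.mul_sum]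
      _ ≤ 32*π^2*(ε/(256*π^2)) * 2 + 32*π^2*(h^2/h₀^3) * 2^(N+1) := by
          have hg1 : (∑ k ∈ Finset.range (N+1), (1/2:ℝ)^k) ≤ 2 := sum_geometric_two_le _
          have hg2 : (∑ k ∈ Finset.range (N+1), (2:ℝ)^k) ≤ 2^(N+1) := by
            rw [geom_sum_eq (by norm_num : (2:ℝ) ≠ 1)]
            norm_num
          have c1 : (0:ℝ) ≤ 32*π^2*(ε/(256*π^2)) := by positivity
          have c2 : (0:ℝ) ≤ 32*π^2*(h^2/h₀^3) := by positivity
          nlinarith [mul_le_mul_of_nonneg_left hg1 c1, mul_le_mul_of_nonneg_left hg2 c2]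
  -- final numeric computation
  have hfin1 : 32*π^2*(ε/(256*π^2)) * 2 = ε/4 := by
    field_simp
    ring
  have hfin2 : 32*π^2*(h^2/h₀^3) * 2^(N+1) ≤ ε/4 := by
    have hkey : (2:ℝ)^(N+1) * h ≤ 4*π := h2N
    have hstep : 32*π^2*(h^2/h₀^3) * 2^(N+1) = 32*π^2*(h/h₀^3) * (2^(N+1) * h) := by
      ring
    rw [hstep]
    have hb : 32*π^2*(h/h₀^3) * (2^(N+1)*h) ≤ 32*π^2*(h/h₀^3) * (4*π) := by
      apply mul_le_mul_of_nonneg_left hkey (by positivity)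
    refine le_trans hb ?_
    have : 32*π^2*(h/h₀^3)*(4*π) = 128*π^3*h/h₀^3 := by ring
    rw [this]
    rw [div_le_iff₀ (by positivity)]
    have hhε' : h ≤ ε * h₀^3/(512*π^3) := hhε
    rw [le_div_iff₀ (by positivity)] at hhε'
    linarith [hhε']
  calc ∫ w, Ker a w ∂μ ≤ ∑ k ∈ Finset.range (N+1),
      (μ (carlesonWindow (2^k*h) θ₀)).toReal * (32*π^2/(4^k*h)) := by
        rw [← hFval]; exact hcomp
    _ ≤ 32*π^2*(ε/(256*π^2)) * 2 + 32*π^2*(h^2/h₀^3) * 2^(N+1) := hsum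
    _ ≤ ε/4 + ε/4 := by
        rw [hfin1]
        linarith [hfin2]
    _ = ε/2 := by ring
/-- For an analytic self-map `ψ` of `𝔻` with boundary-value function `ψs`:
`∫_𝕋 (1-|a|²)/|1 - conj(a)ψ*(ζ)|² dm(ζ) → 0` as `|a| → 1⁻` if and only if
`μ_ψ(S(h, θ₀)) = o(h)` uniformly in `θ₀`. -/
theorem compact_iff_induced_measure_little_o (ψ ψs : ℂ → ℂ)
    (hψ : DifferentiableOn ℂ ψ (Metric.ball (0:ℂ) 1))
    (hmaps : Set.MapsTo ψ (Metric.ball (0:ℂ) 1) (Metric.ball (0:ℂ) 1))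
    (hmeas : Measurable ψs)
    (hmod : ∀ᵐ (θ : ℝ) ∂(volume.restrict (Set.Ioc (0:ℝ) (2 * Real.pi))),
      ‖ψs (Complex.exp (θ * Complex.I))‖ ≤ 1)
    (hrad : ∀ᵐ (θ : ℝ) ∂(volume.restrict (Set.Ioc (0:ℝ) (2 * Real.pi))),
      Filter.Tendsto (fun r : ℝ => ψ (r * Complex.exp (θ * Complex.I)))
        (nhdsWithin 1 (Set.Iio 1)) (nhds (ψs (Complex.exp (θ * Complex.I))))) :
    Filter.Tendsto
        (fun a : ℂ => circleAvg (fun ζ =>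
          (1 - ‖a‖ ^ 2) / ‖1 - (starRingEnd ℂ) a * ψs ζ‖ ^ 2))
        toBoundary (nhds 0)
      ↔ ∀ ε > 0, ∃ h₀ > 0, ∀ h : ℝ, 0 < h → h ≤ h₀ →
          ∀ θ₀ : ℝ, 0 ≤ θ₀ → θ₀ < 2 * Real.pi →
            inducedMeasure ψs (carlesonWindow h θ₀) ≤ ENNReal.ofReal (ε * h) := by
  constructor
  · -- compactness condition implies Carleson o(h)
    intro htend ε hε
    haveI hprob := inducedMeasure_prob hmeas
    have hev : ∀ᶠ a in toBoundary, |circleAvg (fun ζ =>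
        (1 - ‖a‖ ^ 2) / ‖1 - (starRingEnd ℂ) a * ψs ζ‖ ^ 2)| < ε/9 := by
      have := Metric.tendsto_nhds.1 htend (ε/9) (by positivity)
      simpa [Real.dist_eq] using this
    rw [Filter.eventually_iff, toBoundary, Filter.mem_comap] at hev
    obtain ⟨t, ht, hsub⟩ := hev
    obtain ⟨l, hl, hIoo⟩ := mem_nhdsLT_iff_exists_Ioo_subset.1 ht
    rw [Set.mem_Iio] at hl
    refine ⟨min ((1-l)/2) 1, lt_min (by linarith) one_pos, ?_⟩
    intro h hh hhle θ₀ hθ₀ hθ₀2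
    have hh1 : h ≤ 1 := le_trans hhle (min_le_right _ _)
    have hhl : h ≤ (1-l)/2 := le_trans hhle (min_le_left _ _)
    set a : ℂ := ((1-h:ℝ):ℂ) * Complex.exp ((θ₀:ℝ) * Complex.I) with hadef
    have habs : ‖a‖ = 1 - h := by
      rw [hadef, norm_mul, Complex.norm_real, Real.norm_eq_abs, Complex.norm_exp_ofReal_mul_I, mul_one,
        _root_.abs_of_nonneg (by linarith : (0:ℝ) ≤ 1-h)]
    have hlt : ‖a‖ < 1 := by rw [habs]; linarith
    have hmem : a ∈ (fun a : ℂ => ‖a‖) ⁻¹' t := by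
      apply Set.mem_preimage.2
      apply hIoo
      rw [habs]
      exact ⟨by linarith, by linarith⟩
    have hP := hsub hmem
    simp only [Set.mem_setOf_eq] at hP
    have hint := Ker_integrable hmeas hmod hlt
    have hnn : 0 ≤ ∫ w, Ker a w ∂(inducedMeasure ψs) :=
      integral_nonneg (fun w => Ker_nonneg hlt.le w)
    have hPP : ∫ w, Ker a w ∂(inducedMeasure ψs) < ε/9 := by
      rw [circleAvg_eq hmeas] at hP
      rwa [_root_.abs_of_nonneg hnn] at hP
    have hfin : inducedMeasure ψs (carlesonWindow h θ₀) ≠ ⊤ := measure_ne_top _ _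
    have hlow := setIntegral_ge_of_const_le (carlesonWindow_measurable h θ₀) hfin
      (fun w hw => kernel_lower hh hh1 hw) hint.integrableOn
    have hup := setIntegral_le_integral (s := carlesonWindow h θ₀) hint
      (Filter.Eventually.of_forall (fun w => Ker_nonneg hlt.le w))
    have h9 : (0:ℝ) < 9*h := by linarith
    have h2 : 1/(9*h) * (inducedMeasure ψs (carlesonWindow h θ₀)).toReal < ε/9 :=
      lt_of_le_of_lt (le_trans (by rw [smul_eq_mul, measureReal_def, mul_comm] at hlow; exact hlow) hup) hPP
    have h3 := mul_lt_mul_of_pos_left h2 h9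
    rw [show (9*h) * (1/(9*h) * (inducedMeasure ψs (carlesonWindow h θ₀)).toReal)
        = (inducedMeasure ψs (carlesonWindow h θ₀)).toReal by field_simp] at h3
    have hm : (inducedMeasure ψs (carlesonWindow h θ₀)).toReal ≤ ε * h := by nlinarith [h3]
    calc inducedMeasure ψs (carlesonWindow h θ₀)
        = ENNReal.ofReal ((inducedMeasure ψs (carlesonWindow h θ₀)).toReal) :=
          (ENNReal.ofReal_toReal hfin).symm
      _ ≤ ENNReal.ofReal (ε*h) := ENNReal.ofReal_le_ofReal hm
  · -- Carleson o(h) implies compactness condition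
    intro hcar
    haveI hprob := inducedMeasure_prob hmeas
    rw [Metric.tendsto_nhds]
    intro ε hε
    obtain ⟨h₀, hh₀, hcar'⟩ := hcar (ε/(256*π^2)) (by positivity)
    have hπ := Real.pi_gt_three
    set δ : ℝ := min (min (1/2) h₀) (ε * h₀^3 / (512*π^3)) with hδdef
    have hδ1 : δ ≤ 1/2 := le_trans (min_le_left _ _) (min_le_left _ _)
    have hδ2 : δ ≤ h₀ := le_trans (min_le_left _ _) (min_le_right _ _)
    have hδ3 : δ ≤ ε * h₀^3 / (512*π^3) := min_le_right _ _
    have hδpos : 0 < δ := lt_min (lt_min one_half_pos hh₀) (by positivity)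
    have hmem : (fun a : ℂ => ‖a‖) ⁻¹' (Set.Ioo (1-δ) 1) ∈ toBoundary := by
      rw [toBoundary]
      exact Filter.preimage_mem_comap (Ioo_mem_nhdsLT_of_mem ⟨by linarith, le_refl (1:ℝ)⟩)
    filter_upwards [hmem] with a ha
    obtain ⟨ha1, ha2⟩ := ha
    rw [Real.dist_eq, sub_zero, circleAvg_eq hmeas]
    have hnn : 0 ≤ ∫ w, Ker a w ∂(inducedMeasure ψs) :=
      integral_nonneg (fun w => Ker_nonneg ha2.le w)
    rw [_root_.abs_of_nonneg hnn]
    have hbound := reverse_bound hmeas hmod hε hh₀ hcar' ha2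
      (by linarith) (by linarith) (by linarith)
    linarith
end
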